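/- arXiv:0710.3878 — 2 statements merged into one kernel-verified Lean document; each statement's English description precedes it below -/
import Mathlib

section
/- For all real numbers a, b, l, m with m < b < a < l, the quantity z := ((l−a)(m−b))/((l−b)(m−a)) lies in [0,1), and the function E(l,m) := (l−b)^(−1/2) · (a−m)^(−1/2) · F(1/2, 1/2; 1; ((l−a)(m−b))/((l−b)(m−a))) satisfies the characteristic-form equation ∂²E/(∂l ∂m) − (1/(2(l−m))) · (∂E/∂l − ∂E/∂m) = 0. -/
open MeasureTheory Real intervalIntegral

/-- Rising factorial (Pochhammer symbol) `(q)_n = q (q+1) ⋯ (q+n−1)`. -/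
noncomputable def risingFactorial (q : ℝ) : ℕ → ℝ
  | 0 => 1
  | n + 1 => risingFactorial q n * (q + (n : ℝ))

/-- The Gauss hypergeometric function `F(a,b;c;x)` defined by its power series
`∑ ((a)_n (b)_n / ((c)_n n!)) x^n`. -/
noncomputable def hyperF (a b c x : ℝ) : ℝ :=
  ∑' n : ℕ, (risingFactorial a n * risingFactorial b n) /
    (risingFactorial c n * (Nat.factorial n : ℝ)) * x ^ n

/-- The function `E(l,m) = (l−b)^{−1/2} (a−m)^{−1/2} F(1/2,1/2;1;((l−a)(m−b))/((l−b)(m−a)))`. -/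
noncomputable def Echar (a b l m : ℝ) : ℝ :=
  (l - b) ^ (-(1 : ℝ) / 2) * (a - m) ^ (-(1 : ℝ) / 2) *
    hyperF (1 / 2) (1 / 2) 1 (((l - a) * (m - b)) / ((l - b) * (m - a)))

noncomputable def dcoef : ℕ → ℝ := fun n =>
  (risingFactorial (1/2) n / (Nat.factorial n : ℝ))^2

lemma rf_one (n : ℕ) : risingFactorial 1 n = (Nat.factorial n : ℝ) := by
  induction n with
  | zero => simp [risingFactorial]
  | succ k ih => simp [risingFactorial, ih, Nat.factorial_succ]; push_cast; ring

lemma rf_half_nonneg (n : ℕ) : 0 ≤ risingFactorial (1/2) n := by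
  induction n with
  | zero => norm_num [risingFactorial]
  | succ k ih => simp only [risingFactorial]; positivity

lemma rf_half_le (n : ℕ) : risingFactorial (1/2) n ≤ (Nat.factorial n : ℝ) := by
  induction n with
  | zero => norm_num [risingFactorial]
  | succ k ih =>
    simp only [risingFactorial, Nat.factorial_succ]
    push_cast
    have h1 : (0:ℝ) ≤ 1/2 + k := by positivity
    have h2 : risingFactorial (1/2) k * (1/2 + k) ≤ (Nat.factorial k : ℝ) * (1/2 + k) :=
      mul_le_mul_of_nonneg_right ih h1
    have h3 : (Nat.factorial k : ℝ) * (1/2 + k) ≤ ((k:ℝ)+1) * (Nat.factorial k : ℝ) := by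
      have : (0:ℝ) < Nat.factorial k := by positivity
      nlinarith
    linarith

lemma dcoef_nonneg (n : ℕ) : 0 ≤ dcoef n := sq_nonneg _

lemma dcoef_le_one (n : ℕ) : dcoef n ≤ 1 := by
  have h1 := rf_half_nonneg n
  have h2 := rf_half_le n
  have h3 : (0:ℝ) < Nat.factorial n := by positivity
  rw [dcoef, div_pow]
  rw [div_le_one (by positivity)]
  nlinarith

lemma dcoef_rec (n : ℕ) : dcoef (n+1) * ((n:ℝ)+1)^2 = dcoef n * ((n:ℝ)+1/2)^2 := by
  have h3 : (0:ℝ) < Nat.factorial n := by positivity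
  simp only [dcoef, risingFactorial, Nat.factorial_succ]
  push_cast
  field_simp
  ring

lemma dcoef_le_inv (n : ℕ) : dcoef n ≤ 1/((n:ℝ)+1) := by
  induction n with
  | zero => norm_num [dcoef, risingFactorial]
  | succ k ih =>
    have hrec := dcoef_rec k
    have h1 : (0:ℝ) < (k:ℝ)+1 := by positivity
    have h2 : (0:ℝ) < (k:ℝ)+2 := by positivity
    have key : dcoef (k+1) = dcoef k * ((k:ℝ)+1/2)^2 / ((k:ℝ)+1)^2 := by
      field_simp at hrec ⊢; linarith
    rw [key]
    push_cast
    rw [div_le_div_iff₀ (by positivity) (by positivity : (0:ℝ) < (k:ℝ)+1+1)]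
    have hd := dcoef_nonneg k
    have h5 : dcoef k * ((k:ℝ)+1/2)^2 * ((k:ℝ)+1+1) ≤ (1/((k:ℝ)+1)) * ((k:ℝ)+1/2)^2 * ((k:ℝ)+1+1) := by
      exact mul_le_mul_of_nonneg_right (mul_le_mul_of_nonneg_right ih (sq_nonneg ((k:ℝ)+1/2)))
        (by positivity)
    have h6 : (1/((k:ℝ)+1)) * ((k:ℝ)+1/2)^2 * ((k:ℝ)+1+1) ≤ 1 * ((k:ℝ)+1)^2 := by
      rw [div_mul_eq_mul_div, div_mul_eq_mul_div, div_le_iff₀ h1]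
      nlinarith
    linarith

section helpers
variable {e : ℕ → ℝ} {C z : ℝ}

lemma summable_linear_geom {r : ℝ} (hr : |r| < 1) :
    Summable (fun n : ℕ => ((n:ℝ)+1) * r^n) := by
  have hnorm : ‖r‖ < 1 := by rwa [Real.norm_eq_abs]
  have h1 := summable_pow_mul_geometric_of_norm_lt_one (R := ℝ) 1 hnorm
  have h2 : Summable (fun n : ℕ => r^n) := summable_geometric_of_norm_lt_one hnorm
  have := h1.add h2
  convert this using 2 with n
  · rfl
  simp
  ring

lemma summable_quad_geom {r : ℝ} (hr : |r| < 1) :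
    Summable (fun n : ℕ => ((n:ℝ)+1)^2 * r^n) := by
  have hnorm : ‖r‖ < 1 := by rwa [Real.norm_eq_abs]
  have h2 := summable_pow_mul_geometric_of_norm_lt_one (R := ℝ) 2 hnorm
  have h1 := summable_pow_mul_geometric_of_norm_lt_one (R := ℝ) 1 hnorm
  have h0 : Summable (fun n : ℕ => r^n) := summable_geometric_of_norm_lt_one hnorm
  have := (h2.add (h1.mul_left 2)).add h0
  convert this using 2 with n
  · rfl
  simp
  ring

lemma summable_aux (h : ∀ n, |e n| ≤ C * ((n:ℝ)+1)^2) (hz : |z| < 1) :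
    Summable (fun n : ℕ => e n * z ^ n) := by
  refine Summable.of_norm_bounded (g := fun n : ℕ => C * (((n:ℝ)+1)^2 * |z|^n))
    ((summable_quad_geom (r := |z|) (by rwa [abs_abs])).mul_left C) ?_
  intro n
  rw [norm_mul, norm_pow, Real.norm_eq_abs, Real.norm_eq_abs]
  calc |e n| * |z|^n ≤ (C * ((n:ℝ)+1)^2) * |z|^n :=
        mul_le_mul_of_nonneg_right (h n) (by positivity)
    _ = C * (((n:ℝ)+1)^2 * |z|^n) := by ring

lemma summable_deriv_aux (hC : 0 ≤ C) {r : ℝ} (hr : |r| < 1) (hr0 : 0 ≤ r) :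
    Summable (fun n : ℕ => C * ((n:ℝ) * r^(n-1))) := by
  apply Summable.mul_left
  have h : Summable (fun n : ℕ => ((n:ℝ)+1) * r^n) := summable_linear_geom hr
  rw [← summable_nat_add_iff 1]
  convert h using 2 with n
  · rfl
  push_cast
  simp [Nat.add_sub_cancel]

lemma hasDerivAt_series (h : ∀ n, |e n| ≤ C) (hz : |z| < 1) :
    HasDerivAt (fun y => ∑' n, e n * y^n) (∑' n, (e (n+1) * ((n:ℝ)+1)) * z^n) z := by
  have hC : 0 ≤ C := le_trans (abs_nonneg _) (h 0)
  have hbound : ∀ n, |e n| ≤ C * ((n:ℝ)+1)^2 := by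
    intro n
    calc |e n| ≤ C := h n
      _ ≤ C * ((n:ℝ)+1)^2 := by
          nlinarith [mul_nonneg hC (Nat.cast_nonneg (α := ℝ) n),
            mul_nonneg (mul_nonneg hC (Nat.cast_nonneg (α := ℝ) n)) (Nat.cast_nonneg (α := ℝ) n)]
  set r : ℝ := (1 + |z|)/2 with hrdef
  have hr1 : r < 1 := by rw [hrdef]; linarith
  have hr0 : 0 ≤ r := by positivity
  have hzr : |z| < r := by rw [hrdef]; linarith [abs_nonneg z]
  have hu : Summable (fun n : ℕ => C * ((n:ℝ) * r^(n-1))) :=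
    summable_deriv_aux hC (by rwa [abs_of_nonneg hr0]) hr0
  have hg : ∀ (n : ℕ) (y : ℝ), y ∈ Metric.ball (0:ℝ) r →
      HasDerivAt (fun y => e n * y^n) (e n * ((n:ℝ) * y^(n-1))) y :=
    fun n y _ => (hasDerivAt_pow n y).const_mul (e n)
  have hg' : ∀ (n : ℕ) (y : ℝ), y ∈ Metric.ball (0:ℝ) r →
      ‖e n * ((n:ℝ) * y^(n-1))‖ ≤ C * ((n:ℝ) * r^(n-1)) := by
    intro n y hy
    rw [Real.norm_eq_abs, abs_mul, abs_mul, abs_of_nonneg (Nat.cast_nonneg (α := ℝ) n), abs_pow]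
    have hyr : |y| ≤ r := by
      rw [Metric.mem_ball, Real.dist_eq, sub_zero] at hy; exact hy.le
    have hyp : |y|^(n-1) ≤ r^(n-1) := pow_le_pow_left₀ (abs_nonneg _) hyr _
    exact mul_le_mul (h n) (mul_le_mul_of_nonneg_left hyp (Nat.cast_nonneg n)) (by positivity) hC
  have hg0 : Summable fun n => e n * (0:ℝ)^n := summable_aux hbound (by norm_num)
  have key : HasDerivAt (fun y => ∑' n, e n * y^n) (∑' n, e n * ((n:ℝ) * z^(n-1))) z :=
    hasDerivAt_tsum_of_isPreconnected hu (Metric.isOpen_ball)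
      (convex_ball (0:ℝ) r).isPreconnected hg hg'
      (Metric.mem_ball_self (by positivity)) hg0
      (by rwa [Metric.mem_ball, Real.dist_eq, sub_zero])
  have hsum : Summable (fun n : ℕ => e n * ((n:ℝ) * z^(n-1))) := by
    refine Summable.of_norm_bounded (g := fun n : ℕ => C * ((n:ℝ) * |z|^(n-1)))
      (summable_deriv_aux hC (r := |z|) (by rwa [abs_abs]) (abs_nonneg z)) ?_
    intro n
    rw [Real.norm_eq_abs, abs_mul, abs_mul, abs_of_nonneg (Nat.cast_nonneg (α := ℝ) n), abs_pow]
    exact mul_le_mul (h n) (le_refl _) (by positivity) hC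
  have sumeq : (∑' n, e n * ((n:ℝ) * z^(n-1))) = ∑' n, (e (n+1) * ((n:ℝ)+1)) * z^n := by
    rw [Summable.tsum_eq_zero_add hsum]
    simp only [Nat.cast_zero, Nat.add_sub_cancel]
    rw [zero_mul, mul_zero, zero_add]
    apply tsum_congr
    intro n
    push_cast
    ring
  exact sumeq ▸ key
end helpers

noncomputable def Fh (z : ℝ) : ℝ := ∑' n, dcoef n * z^n
noncomputable def F1 (z : ℝ) : ℝ := ∑' n, (dcoef (n+1) * ((n:ℝ)+1)) * z^n
noncomputable def F2 (z : ℝ) : ℝ := ∑' n, ((dcoef (n+2) * ((n:ℝ)+2)) * ((n:ℝ)+1)) * z^n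

lemma bd0 : ∀ n : ℕ, |dcoef n| ≤ 1 := fun n => by
  rw [abs_of_nonneg (dcoef_nonneg n)]; exact dcoef_le_one n

lemma dcoef_mul_le (n : ℕ) : dcoef (n+1) * ((n:ℝ)+1) ≤ 1 := by
  have h := dcoef_le_inv (n+1)
  push_cast at h
  have h1 : (0:ℝ) < (n:ℝ)+1 := by positivity
  have h2 : (0:ℝ) < (n:ℝ)+2 := by positivity
  have := mul_le_mul_of_nonneg_right h h1.le
  calc dcoef (n+1) * ((n:ℝ)+1) ≤ (1/((n:ℝ)+1+1)) * ((n:ℝ)+1) := this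
    _ ≤ 1 := by rw [div_mul_eq_mul_div, div_le_one (by linarith)]; linarith

lemma bd1 : ∀ n : ℕ, |dcoef (n+1) * ((n:ℝ)+1)| ≤ 1 := fun n => by
  rw [abs_of_nonneg (mul_nonneg (dcoef_nonneg _) (by positivity))]
  exact dcoef_mul_le n

lemma bd2 : ∀ n : ℕ, |(dcoef (n+2) * ((n:ℝ)+2)) * ((n:ℝ)+1)| ≤ 1 * ((n:ℝ)+1)^2 := fun n => by
  have h : dcoef (n+2) * ((n:ℝ)+2) ≤ 1 := by
    have := dcoef_mul_le (n+1); push_cast at this; linarith [this]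
  have h0 : 0 ≤ dcoef (n+2) * ((n:ℝ)+2) := mul_nonneg (dcoef_nonneg _) (by positivity)
  rw [abs_of_nonneg (mul_nonneg h0 (by positivity))]
  have h1 : (0:ℝ) ≤ (n:ℝ)+1 := by positivity
  nlinarith

lemma hasDerivAt_Fh {z : ℝ} (hz : |z| < 1) : HasDerivAt Fh (F1 z) z :=
  hasDerivAt_series bd0 hz

lemma hasDerivAt_F1 {z : ℝ} (hz : |z| < 1) : HasDerivAt F1 (F2 z) z := by
  have key := hasDerivAt_series (e := fun n => dcoef (n+1) * ((n:ℝ)+1)) bd1 hz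
  have : (∑' n : ℕ, (dcoef (n+1+1) * (((n+1:ℕ):ℝ)+1) * ((n:ℝ)+1)) * z^n) = F2 z := by
    apply tsum_congr; intro n; push_cast; ring_nf
  exact this ▸ key

lemma hyperF_eq (x : ℝ) : hyperF (1/2) (1/2) 1 x = Fh x := by
  apply tsum_congr
  intro n
  rw [rf_one]
  have h3 : (0:ℝ) < Nat.factorial n := by positivity
  rw [dcoef, div_pow]
  field_simp

lemma hyper_ode {z : ℝ} (hz : |z| < 1) :
    z * (1-z) * F2 z + (1-2*z) * F1 z - Fh z / 4 = 0 := by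
  -- summabilities
  have habs : ∀ n : ℕ, |(n:ℝ)| ≤ (n:ℝ)+1 := fun n => by
    rw [abs_of_nonneg (Nat.cast_nonneg n)]; linarith
  have hsa : Summable (fun n : ℕ => dcoef n * z^n) := by
    apply summable_aux (C := 1) (fun n => ?_) hz
    nlinarith [bd0 n, abs_nonneg (dcoef n), Nat.cast_nonneg (α := ℝ) n]
  have hsb : Summable (fun n : ℕ => (dcoef (n+1) * ((n:ℝ)+1)) * z^n) := by
    apply summable_aux (C := 1) (fun n => ?_) hz
    nlinarith [bd1 n, abs_nonneg (dcoef (n+1) * ((n:ℝ)+1)), Nat.cast_nonneg (α := ℝ) n]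
  have hsc : Summable (fun n : ℕ => ((dcoef (n+2) * ((n:ℝ)+2)) * ((n:ℝ)+1)) * z^n) :=
    summable_aux bd2 hz
  have hsh : Summable (fun n : ℕ => (dcoef (n+1) * ((n:ℝ)+1) * (n:ℝ)) * z^n) := by
    apply summable_aux (C := 1) (fun n => ?_) hz
    rw [abs_mul]
    have := bd1 n
    have h2 := habs n
    nlinarith [abs_nonneg (dcoef (n+1) * ((n:ℝ)+1)), abs_nonneg ((n:ℝ)), Nat.cast_nonneg (α := ℝ) n]
  have hsk : Summable (fun n : ℕ => (dcoef n * (n:ℝ) * ((n:ℝ)-1)) * z^n) := by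
    apply summable_aux (C := 1) (fun n => ?_) hz
    rw [abs_mul, abs_mul]
    have h0 := bd0 n
    have h2 := habs n
    have h3 : |(n:ℝ)-1| ≤ (n:ℝ)+1 := by
      rw [abs_le]; constructor <;> [linarith [Nat.cast_nonneg (α := ℝ) n]; linarith [Nat.cast_nonneg (α := ℝ) n]]
    calc |dcoef n| * |(n:ℝ)| * |(n:ℝ)-1| ≤ 1 * ((n:ℝ)+1) * ((n:ℝ)+1) := by
          have hn : (0:ℝ) ≤ (n:ℝ)+1 := by positivity
          exact mul_le_mul (mul_le_mul h0 h2 (abs_nonneg _) (by norm_num)) h3 (abs_nonneg _)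
            (by positivity)
      _ = 1 * ((n:ℝ)+1)^2 := by ring
  have hsm : Summable (fun n : ℕ => (dcoef n * (n:ℝ)) * z^n) := by
    apply summable_aux (C := 1) (fun n => ?_) hz
    rw [abs_mul]
    have h0 := bd0 n
    have h2 := habs n
    nlinarith [abs_nonneg (dcoef n), abs_nonneg ((n:ℝ)), Nat.cast_nonneg (α := ℝ) n]
  -- shift identities
  have eq1 : z * F2 z = ∑' n : ℕ, (dcoef (n+1) * ((n:ℝ)+1) * (n:ℝ)) * z^n := by
    rw [F2, ← tsum_mul_left, Summable.tsum_eq_zero_add hsh]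
    simp only [Nat.cast_zero]
    rw [show (dcoef (0+1) * ((0:ℝ)+1) * (0:ℝ)) * z^0 = 0 by ring, zero_add]
    apply tsum_congr; intro n; push_cast; ring
  have eq3 : z * F1 z = ∑' n : ℕ, (dcoef n * (n:ℝ)) * z^n := by
    rw [F1, ← tsum_mul_left, Summable.tsum_eq_zero_add hsm]
    simp only [Nat.cast_zero]
    rw [show (dcoef 0 * (0:ℝ)) * z^0 = 0 by ring, zero_add]
    apply tsum_congr; intro n; push_cast; ring
  have eq2 : z * (z * F2 z) = ∑' n : ℕ, (dcoef n * (n:ℝ) * ((n:ℝ)-1)) * z^n := by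
    rw [eq1, ← tsum_mul_left, Summable.tsum_eq_zero_add hsk]
    simp only [Nat.cast_zero]
    rw [show (dcoef 0 * (0:ℝ) * ((0:ℝ)-1)) * z^0 = 0 by ring, zero_add]
    apply tsum_congr; intro n; push_cast; ring
  have expand : z * (1-z) * F2 z + (1-2*z) * F1 z - Fh z / 4
      = (z * F2 z - z * (z * F2 z)) + (F1 z - 2 * (z * F1 z)) - Fh z / 4 := by ring
  rw [expand, eq2, eq1, eq3, F1, Fh]
  have h2m : (2:ℝ) * (∑' n : ℕ, (dcoef n * (n:ℝ)) * z^n) = ∑' n : ℕ, 2 * ((dcoef n * (n:ℝ)) * z^n) :=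
    (tsum_mul_left).symm
  have h4 : (∑' n : ℕ, dcoef n * z^n) / 4 = ∑' n : ℕ, (dcoef n * z^n) / 4 :=
    tsum_div_const.symm
  rw [h2m, h4, ← Summable.tsum_sub hsh hsk, ← Summable.tsum_sub hsb (hsm.mul_left 2),
    ← Summable.tsum_add ((hsh.sub hsk)) (hsb.sub (hsm.mul_left 2)),
    ← Summable.tsum_sub (((hsh.sub hsk)).add (hsb.sub (hsm.mul_left 2))) (hsa.div_const 4)]
  have hzero : ∀ n : ℕ, ((dcoef (n+1) * ((n:ℝ)+1) * (n:ℝ)) * z^n - (dcoef n * (n:ℝ) * ((n:ℝ)-1)) * z^n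
      + ((dcoef (n+1) * ((n:ℝ)+1)) * z^n - 2 * ((dcoef n * (n:ℝ)) * z^n)) - (dcoef n * z^n)/4) = 0 := by
    intro n
    linear_combination z^n * dcoef_rec n
  calc (∑' n : ℕ, ((dcoef (n+1) * ((n:ℝ)+1) * (n:ℝ)) * z^n - (dcoef n * (n:ℝ) * ((n:ℝ)-1)) * z^n
      + ((dcoef (n+1) * ((n:ℝ)+1)) * z^n - 2 * ((dcoef n * (n:ℝ)) * z^n)) - (dcoef n * z^n)/4))
      = ∑' _ : ℕ, (0:ℝ) := tsum_congr hzero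
    _ = 0 := tsum_zero

noncomputable def zf (a b l m : ℝ) : ℝ := ((l - a) * (m - b)) / ((l - b) * (m - a))

lemma zmem {a b l m : ℝ} (h1 : m < b) (h2 : b < a) (h3 : a < l) :
    0 < zf a b l m ∧ zf a b l m < 1 := by
  have hnum : (l - a) * (m - b) < 0 := mul_neg_of_pos_of_neg (by linarith) (by linarith)
  have hden : (l - b) * (m - a) < 0 := mul_neg_of_pos_of_neg (by linarith) (by linarith)
  constructor
  · exact div_pos_of_neg_of_neg hnum hden
  · rw [zf, div_lt_one_of_neg hden]
    nlinarith

-- derivative of z in l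
lemma hasDerivAt_zf_l {a b l m : ℝ} (hlb : l - b ≠ 0) (hma : m - a ≠ 0) :
    HasDerivAt (fun l' => zf a b l' m)
      (((m-b)*((l-b)*(m-a)) - ((l-a)*(m-b))*(m-a))/(((l-b)*(m-a))^2)) l := by
  have h1 : HasDerivAt (fun l' : ℝ => (l'-a)*(m-b)) (m-b) l := by
    simpa using ((hasDerivAt_id l).sub_const a).mul_const (m-b)
  have h2 : HasDerivAt (fun l' : ℝ => (l'-b)*(m-a)) (m-a) l := by
    simpa using ((hasDerivAt_id l).sub_const b).mul_const (m-a)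
  have hden : (l-b)*(m-a) ≠ 0 := mul_ne_zero hlb hma
  have := h1.div h2 hden
  convert this using 1
  · rfl
  · rfl
  · rfl

lemma hasDerivAt_zf_m {a b l m : ℝ} (hlb : l - b ≠ 0) (hma : m - a ≠ 0) :
    HasDerivAt (fun m' => zf a b l m')
      (((l-a)*((l-b)*(m-a)) - ((l-a)*(m-b))*(l-b))/(((l-b)*(m-a))^2)) m := by
  have h1 : HasDerivAt (fun m' : ℝ => (l-a)*(m'-b)) (l-a) m := by
    simpa using (((hasDerivAt_id m).sub_const b).const_mul (l-a))
  have h2 : HasDerivAt (fun m' : ℝ => (l-b)*(m'-a)) (l-b) m := by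
    simpa using (((hasDerivAt_id m).sub_const a).const_mul (l-b))
  have hden : (l-b)*(m-a) ≠ 0 := mul_ne_zero hlb hma
  have := h1.div h2 hden
  convert this using 1
  · rfl
  · rfl
  · rfl

noncomputable def zld (a b l m : ℝ) : ℝ := (a-b)*(m-b)/((l-b)^2*(m-a))
noncomputable def zmd (a b l m : ℝ) : ℝ := (b-a)*(l-a)/((l-b)*(m-a)^2)
noncomputable def zlmd (a b l m : ℝ) : ℝ := -(a-b)^2/(((l-b)*(m-a))^2)

noncomputable def Gfun (a b l m : ℝ) : ℝ :=
  (1*(-(1:ℝ)/2)*(l-b)^(-(1:ℝ)/2-1)) * ((a-m)^(-(1:ℝ)/2) * Fh (zf a b l m))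
  + (l-b)^(-(1:ℝ)/2) * ((a-m)^(-(1:ℝ)/2) * (F1 (zf a b l m) * zld a b l m))

noncomputable def Hfun (a b l m : ℝ) : ℝ :=
  ((-1)*(-(1:ℝ)/2)*(a-m)^(-(1:ℝ)/2-1)) * ((l-b)^(-(1:ℝ)/2) * Fh (zf a b l m))
  + (a-m)^(-(1:ℝ)/2) * ((l-b)^(-(1:ℝ)/2) * (F1 (zf a b l m) * zmd a b l m))

lemma abs_zf_lt_one {a b l m : ℝ} (h1 : m < b) (h2 : b < a) (h3 : a < l) :
    |zf a b l m| < 1 := by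
  obtain ⟨hz0, hz1⟩ := zmem h1 h2 h3
  rw [abs_lt]; constructor <;> linarith

lemma hasDerivAt_zf_l' {a b l m : ℝ} (h1 : m < b) (h2 : b < a) (h3 : a < l) :
    HasDerivAt (fun l' => zf a b l' m) (zld a b l m) l := by
  have hlb : l - b ≠ 0 := by intro h; nlinarith [h]
  have hma : m - a ≠ 0 := by intro h; nlinarith [h]
  have := hasDerivAt_zf_l (a := a) hlb hma
  convert this using 1
  unfold zld
  field_simp
  ring

lemma hasDerivAt_zf_m' {a b l m : ℝ} (h1 : m < b) (h2 : b < a) (h3 : a < l) :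
    HasDerivAt (fun m' => zf a b l m') (zmd a b l m) m := by
  have hlb : l - b ≠ 0 := by intro h; nlinarith [h]
  have hma : m - a ≠ 0 := by intro h; nlinarith [h]
  have := hasDerivAt_zf_m (b := b) hlb hma
  convert this using 1
  unfold zmd
  field_simp
  ring

lemma hasDerivAt_zld_m {a b l m : ℝ} (h1 : m < b) (h2 : b < a) (h3 : a < l) :
    HasDerivAt (fun m' => zld a b l m') (zlmd a b l m) m := by
  have hlb : l - b ≠ 0 := by intro h; nlinarith [h]
  have hma : m - a ≠ 0 := by intro h; nlinarith [h]
  have h1' : HasDerivAt (fun m' : ℝ => (a-b)*(m'-b)) (a-b) m := by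
    simpa using (((hasDerivAt_id m).sub_const b).const_mul (a-b))
  have h2' : HasDerivAt (fun m' : ℝ => (l-b)^2*(m'-a)) ((l-b)^2) m := by
    simpa using (((hasDerivAt_id m).sub_const a).const_mul ((l-b)^2))
  have hden : (l-b)^2*(m-a) ≠ 0 := mul_ne_zero (pow_ne_zero _ hlb) hma
  have := h1'.div h2' hden
  convert this using 1
  · rfl
  · rfl
  · rfl
  unfold zlmd
  field_simp
  ring

lemma hasDerivAt_Echar_l {a b l m : ℝ} (h1 : m < b) (h2 : b < a) (h3 : a < l) :
    HasDerivAt (fun l' => Echar a b l' m) (Gfun a b l m) l := by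
  have hlb : (0:ℝ) < l - b := by linarith
  have hz := abs_zf_lt_one h1 h2 h3
  have hu : HasDerivAt (fun l' : ℝ => (l'-b)^(-(1:ℝ)/2))
      (1*(-(1:ℝ)/2)*(l-b)^(-(1:ℝ)/2-1)) l :=
    ((hasDerivAt_id l).sub_const b).rpow_const (Or.inl hlb.ne')
  have hFz : HasDerivAt (fun l' => Fh (zf a b l' m)) (F1 (zf a b l m) * zld a b l m) l :=
    (hasDerivAt_Fh hz).comp (h₂ := Fh) l (hasDerivAt_zf_l' h1 h2 h3)
  have hv : HasDerivAt (fun l' => (a-m)^(-(1:ℝ)/2) * Fh (zf a b l' m))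
      ((a-m)^(-(1:ℝ)/2) * (F1 (zf a b l m) * zld a b l m)) l := hFz.const_mul _
  have key := hu.mul hv
  refine HasDerivAt.congr_of_eventuallyEq key (Filter.Eventually.of_forall fun x => ?_)
  simp only [Echar, hyperF_eq, zf, Pi.mul_apply]
  ring

lemma hasDerivAt_Echar_m {a b l m : ℝ} (h1 : m < b) (h2 : b < a) (h3 : a < l) :
    HasDerivAt (fun m' => Echar a b l m') (Hfun a b l m) m := by
  have ham : (0:ℝ) < a - m := by linarith
  have hz := abs_zf_lt_one h1 h2 h3
  have hu : HasDerivAt (fun m' : ℝ => (a-m')^(-(1:ℝ)/2))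
      ((-1)*(-(1:ℝ)/2)*(a-m)^(-(1:ℝ)/2-1)) m :=
    ((hasDerivAt_id m).const_sub a).rpow_const (Or.inl ham.ne')
  have hFz : HasDerivAt (fun m' => Fh (zf a b l m')) (F1 (zf a b l m) * zmd a b l m) m :=
    (hasDerivAt_Fh hz).comp (h₂ := Fh) m (hasDerivAt_zf_m' h1 h2 h3)
  have hv : HasDerivAt (fun m' => (l-b)^(-(1:ℝ)/2) * Fh (zf a b l m'))
      ((l-b)^(-(1:ℝ)/2) * (F1 (zf a b l m) * zmd a b l m)) m := hFz.const_mul _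
  have key := hu.mul hv
  refine HasDerivAt.congr_of_eventuallyEq key (Filter.Eventually.of_forall fun x => ?_)
  simp only [Echar, hyperF_eq, zf, Pi.mul_apply]
  ring

lemma hasDerivAt_Gfun_m {a b l m : ℝ} (h1 : m < b) (h2 : b < a) (h3 : a < l) :
    HasDerivAt (fun m' => Gfun a b l m')
      ((1*(-(1:ℝ)/2)*(l-b)^(-(1:ℝ)/2-1)) *
          (((-1)*(-(1:ℝ)/2)*(a-m)^(-(1:ℝ)/2-1)) * Fh (zf a b l m)
            + (a-m)^(-(1:ℝ)/2) * (F1 (zf a b l m) * zmd a b l m))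
        + (l-b)^(-(1:ℝ)/2) *
          (((-1)*(-(1:ℝ)/2)*(a-m)^(-(1:ℝ)/2-1)) * (F1 (zf a b l m) * zld a b l m)
            + (a-m)^(-(1:ℝ)/2) *
              ((F2 (zf a b l m) * zmd a b l m) * zld a b l m
                + F1 (zf a b l m) * zlmd a b l m))) m := by
  have ham : (0:ℝ) < a - m := by linarith
  have hz := abs_zf_lt_one h1 h2 h3
  have ht' : HasDerivAt (fun m' : ℝ => (a-m')^(-(1:ℝ)/2))
      ((-1)*(-(1:ℝ)/2)*(a-m)^(-(1:ℝ)/2-1)) m :=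
    ((hasDerivAt_id m).const_sub a).rpow_const (Or.inl ham.ne')
  have hFz : HasDerivAt (fun m' => Fh (zf a b l m')) (F1 (zf a b l m) * zmd a b l m) m :=
    (hasDerivAt_Fh hz).comp (h₂ := Fh) m (hasDerivAt_zf_m' h1 h2 h3)
  have hF1z : HasDerivAt (fun m' => F1 (zf a b l m')) (F2 (zf a b l m) * zmd a b l m) m :=
    (hasDerivAt_F1 hz).comp (h₂ := F1) m (hasDerivAt_zf_m' h1 h2 h3)
  have hzl := hasDerivAt_zld_m h1 h2 h3
  have hterm1 := (ht'.mul hFz).const_mul (1*(-(1:ℝ)/2)*(l-b)^(-(1:ℝ)/2-1))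
  have hterm2 := (ht'.mul (hF1z.mul hzl)).const_mul ((l-b)^(-(1:ℝ)/2))
  exact hterm1.add hterm2

set_option maxHeartbeats 2000000 in
theorem statement0 (a b l m : ℝ) (h1 : m < b) (h2 : b < a) (h3 : a < l) :
    (0 ≤ ((l - a) * (m - b)) / ((l - b) * (m - a)) ∧
      ((l - a) * (m - b)) / ((l - b) * (m - a)) < 1) ∧
    deriv (fun m' => deriv (fun l' => Echar a b l' m') l) m
      - 1 / (2 * (l - m)) *
        (deriv (fun l' => Echar a b l' m) l - deriv (fun m' => Echar a b l m') m) = 0 := by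
  obtain ⟨hz0, hz1⟩ := zmem h1 h2 h3
  refine ⟨⟨le_of_lt hz0, hz1⟩, ?_⟩
  have hz := abs_zf_lt_one h1 h2 h3
  have hlb : (0:ℝ) < l - b := by linarith
  have ham : (0:ℝ) < a - m := by linarith
  -- rewrite the three derivatives
  have hev : (fun m' => deriv (fun l' => Echar a b l' m') l) =ᶠ[nhds m]
      (fun m' => Gfun a b l m') := by
    filter_upwards [Iio_mem_nhds h1] with m' hm'
    exact (hasDerivAt_Echar_l hm' h2 h3).deriv
  rw [Filter.EventuallyEq.deriv_eq hev, (hasDerivAt_Gfun_m h1 h2 h3).deriv,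
    (hasDerivAt_Echar_l h1 h2 h3).deriv, (hasDerivAt_Echar_m h1 h2 h3).deriv]
  -- use the hypergeometric ODE to express F2
  have hzz : zf a b l m * (1 - zf a b l m) ≠ 0 := ne_of_gt (mul_pos hz0 (by linarith))
  have hZ : F2 (zf a b l m) =
      (Fh (zf a b l m) / 4 - (1 - 2 * zf a b l m) * F1 (zf a b l m))
        / (zf a b l m * (1 - zf a b l m)) := by
    rw [eq_div_iff hzz]
    linear_combination hyper_ode hz
  rw [hZ]
  unfold Gfun Hfun zf zld zmd zlmd
  rw [show (l-b)^(-(1:ℝ)/2-1) = (l-b)^(-(1:ℝ)/2)/(l-b) by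
        rw [Real.rpow_sub hlb, Real.rpow_one],
      show (a-m)^(-(1:ℝ)/2-1) = (a-m)^(-(1:ℝ)/2)/(a-m) by
        rw [Real.rpow_sub ham, Real.rpow_one]]
  -- change variables to differences u = l-b, v = m-a, k = a-b
  rw [show b - a = -(a - b) by ring, show a - m = -(m - a) by ring,
    show m - b = (m - a) + (a - b) by ring,
    show l - a = (l - b) - (a - b) by ring,
    show l - m = (l - b) - (m - a) - (a - b) by ring]
  generalize hup : l - b = u
  generalize hvp : m - a = v
  generalize hkp : a - b = k
  generalize u ^ (-(1:ℝ)/2) = s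
  generalize (-v) ^ (-(1:ℝ)/2) = t
  have hu : u ≠ 0 := by rw [← hup]; exact hlb.ne'
  have hv : v ≠ 0 := by rw [← hvp]; intro h; nlinarith [h]
  have hk : k ≠ 0 := by rw [← hkp]; intro h; nlinarith [h]
  have hL : u - v - k ≠ 0 := by
    rw [← hup, ← hvp, ← hkp]; intro h; nlinarith [h]
  have huk : u - k ≠ 0 := by rw [← hup, ← hkp]; intro h; nlinarith [h]
  have hvk : v + k ≠ 0 := by rw [← hvp, ← hkp]; intro h; nlinarith [h]
  have hmix : u*v - (u-k)*(v+k) ≠ 0 := by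
    intro h
    apply hL
    have : -k * (u - v - k) = 0 := by linear_combination h
    rcases mul_eq_zero.1 this with h' | h'
    · exact absurd (by linarith [h']) hk
    · exact h'
  field_simp
  ring
end

section
/- For every ρ > 0 there exists a constant C > 0 such that for all z > 1: ∫_0^{z−1} ((z+1)² − r²)^{−ρ/2} · ( F(1/2, 1/2; 1; ((z−1)² − r²)/((z+1)² − r²)) )^ρ dr ≤ C (1 + ln z)^ρ (z − 1) (z + 1)^{−ρ} · F(1/2, ρ/2; 3/2; (z−1)²/(z+1)²). Moreover, if ρ ∈ (0,2), then there exists a constant C' > 0 such that for all z > 1 the same integral is bounded by C' (1 + ln z)^ρ (z − 1) (z + 1)^{−ρ}. -/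
open MeasureTheory Real intervalIntegral

lemma rF_succ (q : ℝ) (n : ℕ) :
    risingFactorial q (n + 1) = risingFactorial q n * (q + n) := rfl

lemma rF_pos {α : ℝ} (hα : 0 < α) : ∀ n, 0 < risingFactorial α n := by
  intro n
  induction n with
  | zero => exact one_pos
  | succ n ih =>
    rw [rF_succ]
    exact mul_pos ih (by positivity)

lemma rF_one (n : ℕ) : risingFactorial 1 n = (n.factorial : ℝ) := by
  induction n with
  | zero => simp [risingFactorial]
  | succ n ih =>
    rw [rF_succ, ih, Nat.factorial_succ]
    push_cast
    ring

lemma rF_half (n : ℕ) :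
    risingFactorial (1/2) n * (1/2 + n) = (1/2) * risingFactorial (3/2) n := by
  induction n with
  | zero => norm_num [risingFactorial]
  | succ n ih =>
    rw [rF_succ, rF_succ]
    push_cast
    nlinarith [ih]

set_option maxHeartbeats 1000000 in
/-- The real binomial series. -/
lemma hasSum_binomial {α : ℝ} (hα : 0 < α) {x : ℝ} (hx0 : 0 ≤ x) (hx1 : x < 1) :
    HasSum (fun n : ℕ => risingFactorial α n / (Nat.factorial n : ℝ) * x ^ n)
      ((1 - x) ^ (-α)) := by
  set b : ℕ → ℝ := fun n => risingFactorial α n / (Nat.factorial n : ℝ) with hbdef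
  have hb_pos : ∀ n, 0 < b n := fun n => div_pos (rF_pos hα n) (by positivity)
  have hb_succ : ∀ n : ℕ, b (n + 1) * ((n : ℝ) + 1) = b n * (α + n) := by
    intro n
    simp only [hbdef, rF_succ, Nat.factorial_succ]
    have h1 : ((n.factorial : ℝ)) ≠ 0 := by positivity
    have h2 : ((n : ℝ) + 1) ≠ 0 := by positivity
    push_cast
    field_simp
  set R : ℝ := (1 + x) / 2 with hRdef
  have hR0 : 0 < R := by simp only [hRdef]; linarith
  have hxR : x < R := by simp only [hRdef]; linarith
  have hR1 : R < 1 := by simp only [hRdef]; linarith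
  set t : Set ℝ := Set.Ioo (-R) R with htdef
  set u : ℕ → ℝ := fun n => b n * n * R ^ (n - 1) with hudef
  have hu : Summable u := by
    have hrr : (1 + R) / 2 < 1 := by linarith
    apply summable_of_ratio_norm_eventually_le hrr
    have htend : Filter.Tendsto (fun n : ℕ => R * (1 + α / n)) Filter.atTop (nhds R) := by
      have h0 : Filter.Tendsto (fun n : ℕ => α / n) Filter.atTop (nhds 0) :=
        tendsto_const_div_atTop_nhds_zero_nat α
      have h1 := (h0.const_add 1).const_mul R
      simpa using h1
    have hev : ∀ᶠ n : ℕ in Filter.atTop, R * (1 + α / n) ≤ (1 + R) / 2 :=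
      htend.eventually_le_const (by linarith)
    filter_upwards [hev, Filter.eventually_ge_atTop 1] with n hn hn1
    have hnR : (0:ℝ) < n := by exact_mod_cast hn1
    have h1 : u (n + 1) = b n * (α + n) * R ^ n := by
      have hc : b (n + 1) * ((n + 1 : ℕ) : ℝ) = b n * (α + n) := by
        push_cast; exact hb_succ n
      calc u (n + 1) = b (n + 1) * ((n + 1 : ℕ) : ℝ) * R ^ n := by
            simp [hudef, Nat.add_sub_cancel]
        _ = b n * (α + n) * R ^ n := by rw [hc]
    have h2 : u n * (R * (1 + α / n)) = b n * (α + n) * R ^ n := by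
      obtain ⟨m, rfl⟩ : ∃ m, n = m + 1 := ⟨n - 1, by omega⟩
      simp only [hudef, Nat.add_sub_cancel]
      have hm : ((m : ℝ) + 1) ≠ 0 := by positivity
      push_cast
      rw [pow_succ]
      field_simp
      ring
    have hun : 0 < u n := by
      simp only [hudef]
      exact mul_pos (mul_pos (hb_pos n) hnR) (pow_pos hR0 _)
    have hun1 : 0 < u (n + 1) := by
      rw [h1]
      have hαn : (0:ℝ) < α + n := by linarith
      exact mul_pos (mul_pos (hb_pos n) hαn) (pow_pos hR0 _)
    rw [Real.norm_eq_abs, Real.norm_eq_abs, abs_of_pos hun1, abs_of_pos hun]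
    rw [h1, ← h2]
    calc u n * (R * (1 + α / n)) ≤ u n * ((1 + R) / 2) := by
          exact mul_le_mul_of_nonneg_left hn hun.le
      _ = (1 + R) / 2 * u n := mul_comm _ _
  have hS0 : Summable (fun n => b n * (0:ℝ) ^ n) := by
    apply summable_of_ne_finset_zero (s := {0})
    intro n hn
    simp only [Finset.mem_singleton] at hn
    simp [zero_pow hn]
  have hderiv : ∀ (n : ℕ) (y : ℝ), y ∈ t →
      HasDerivAt (fun w => b n * w ^ n) (b n * (n * y ^ (n - 1))) y :=
    fun n y _ => (hasDerivAt_pow n y).const_mul (b n)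
  have hbound : ∀ (n : ℕ) (y : ℝ), y ∈ t → ‖b n * (n * y ^ (n - 1))‖ ≤ u n := by
    intro n y hy
    have hyR : |y| ≤ R := by
      rw [abs_le]; exact ⟨hy.1.le, hy.2.le⟩
    have : ‖b n * (n * y ^ (n - 1))‖ = b n * n * |y| ^ (n - 1) := by
      rw [norm_mul, norm_mul, norm_pow, Real.norm_eq_abs, Real.norm_eq_abs,
        Real.norm_eq_abs, abs_of_pos (hb_pos n), Nat.abs_cast, mul_assoc]
    rw [this]
    simp only [hudef]
    have hpow := pow_le_pow_left₀ (abs_nonneg y) hyR (n - 1)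
    have hbn : 0 ≤ b n * n := mul_nonneg (hb_pos n).le (Nat.cast_nonneg n)
    exact mul_le_mul_of_nonneg_left hpow hbn
  have ht_open : IsOpen t := isOpen_Ioo
  have ht_conn : IsPreconnected t := (convex_Ioo _ _).isPreconnected
  have h0t : (0:ℝ) ∈ t := ⟨by linarith, hR0⟩
  have hxt : x ∈ t := ⟨by linarith, hxR⟩
  have hsumm : ∀ y ∈ t, Summable fun n => b n * y ^ n := fun y hy =>
    summable_of_summable_hasDerivAt_of_isPreconnected hu ht_open ht_conn hderiv hbound h0t hS0 hy
  set S : ℝ → ℝ := fun w => ∑' n, b n * w ^ n with hSdef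
  set D : ℝ → ℝ := fun y => ∑' n, b n * ((n : ℝ) * y ^ (n - 1)) with hDdef
  have hDD : ∀ y ∈ t, HasDerivAt S (D y) y := fun y hy =>
    hasDerivAt_tsum_of_isPreconnected hu ht_open ht_conn hderiv hbound h0t hS0 hy
  have hkey : ∀ y ∈ t, (1 - y) * D y = α * S y := by
    intro y hy
    have hsD : Summable (fun n => b n * ((n : ℝ) * y ^ (n - 1))) :=
      Summable.of_norm_bounded hu (fun n => hbound n y hy)
    have hD : HasSum (fun n => b n * ((n : ℝ) * y ^ (n - 1))) (D y) := hsD.hasSum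
    have hS : HasSum (fun n => b n * y ^ n) (S y) := (hsumm y hy).hasSum
    have hshift : HasSum (fun n => b (n + 1) * (((n + 1 : ℕ) : ℝ) * y ^ (n + 1 - 1))) (D y) := by
      refine (hasSum_nat_add_iff (f := fun n => b n * ((n : ℝ) * y ^ (n - 1))) 1).2 ?_
      simpa using hD
    have hyD : HasSum (fun n => b n * (n : ℝ) * y ^ n) (y * D y) := by
      have h := hD.mul_left y
      have he : (fun n => y * (b n * ((n : ℝ) * y ^ (n - 1)))) = fun n => b n * (n : ℝ) * y ^ n := by
        funext n
        cases n with
        | zero => simp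
        | succ m =>
          rw [Nat.add_sub_cancel, pow_succ]
          push_cast
          ring
      rwa [he] at h
    have hcomb : HasSum (fun n => α * (b n * y ^ n) + b n * (n : ℝ) * y ^ n)
        (α * S y + y * D y) := (hS.mul_left α).add hyD
    have he2 : (fun n => α * (b n * y ^ n) + b n * (n : ℝ) * y ^ n)
        = fun n => b (n + 1) * (((n + 1 : ℕ) : ℝ) * y ^ (n + 1 - 1)) := by
      funext n
      rw [Nat.add_sub_cancel, Nat.cast_succ]
      linear_combination (-(y ^ n)) * hb_succ n
    rw [he2] at hcomb
    have hDeq : D y = α * S y + y * D y := hshift.unique hcomb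
    linear_combination hDeq
  have hPhi : ∀ y ∈ t, HasDerivAt (fun w => (1 - w) ^ α * S w) 0 y := by
    intro y hy
    have h1y : 0 < 1 - y := by
      have := hy.2
      simp only [htdef, Set.mem_Ioo] at hy
      linarith [hy.2]
    have hin : HasDerivAt (fun w : ℝ => 1 - w) (-1) y := (hasDerivAt_id y).const_sub 1
    have hrp : HasDerivAt (fun w : ℝ => (1 - w) ^ α) (α * (1 - y) ^ (α - 1) * (-1)) y := by
      have h := (Real.hasDerivAt_rpow_const (x := 1 - y) (p := α) (Or.inl h1y.ne')).comp y hin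
      simpa [Function.comp_def] using h
    have hmul := hrp.mul (hDD y hy)
    refine hmul.congr_deriv (Eq.symm ?_)
    have hsplit : (1 - y) ^ α = (1 - y) ^ (α - 1) * (1 - y) := by
      have h := Real.rpow_add h1y (α - 1) 1
      rw [Real.rpow_one] at h
      rw [show α - 1 + 1 = α by ring] at h
      exact h
    rw [hsplit]
    linear_combination (-(1 - y) ^ (α - 1)) * hkey y hy
  have hsub : Set.Icc (0:ℝ) x ⊆ t := fun w hw => ⟨by linarith [hw.1], lt_of_le_of_lt hw.2 hxR⟩
  have hconst : (1 - x) ^ α * S x = (1 - (0:ℝ)) ^ α * S 0 := by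
    have h := constant_of_has_deriv_right_zero (f := fun w => (1 - w) ^ α * S w) (a := 0) (b := x)
      (fun w hw => ((hPhi w (hsub hw)).continuousAt.continuousWithinAt))
      (fun w hw => ((hPhi w (hsub ⟨hw.1, hw.2.le⟩)).hasDerivWithinAt))
    exact h x (Set.right_mem_Icc.2 hx0)
  have hS0v : S 0 = 1 := by
    have h : (∑' n : ℕ, b n * (0:ℝ) ^ n) = b 0 * (0:ℝ) ^ 0 :=
      tsum_eq_single 0 (fun n hn => by simp [zero_pow hn])
    simp only [hSdef]
    rw [h]
    simp [hbdef, risingFactorial]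
  have h1x : 0 < 1 - x := by linarith
  have hSx : S x = (1 - x) ^ (-α) := by
    have hone : (1 - x) ^ α * S x = 1 := by
      rw [hconst, hS0v]; simp
    have hpos : (0:ℝ) < (1 - x) ^ α := Real.rpow_pos_of_pos h1x α
    rw [Real.rpow_neg h1x.le]
    field_simp
    linarith [hone]
  have hfin : HasSum (fun n => b n * x ^ n) (S x) := (hsumm x hxt).hasSum
  rw [hSx] at hfin
  exact hfin

/-- `F(1/2,s;3/2;w)` has simple coefficients. -/
lemma hyperF_half (s w : ℝ) :
    hyperF (1/2) s (3/2) w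
      = ∑' n : ℕ, risingFactorial s n / ((2 * (n : ℝ) + 1) * (Nat.factorial n : ℝ)) * w ^ n := by
  unfold hyperF
  refine tsum_congr fun n => ?_
  have h32 : (0:ℝ) < risingFactorial (3/2) n := rF_pos (by norm_num) n
  have h := rF_half n
  have hfac : (0:ℝ) < (Nat.factorial n : ℝ) := by positivity
  have h2n : (0:ℝ) < 2 * (n:ℝ) + 1 := by positivity
  have hkey : risingFactorial (1/2) n / risingFactorial (3/2) n = 1 / (2 * (n:ℝ) + 1) := by
    rw [div_eq_div_iff h32.ne' h2n.ne']
    nlinarith [h]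
  have : risingFactorial (1/2) n * risingFactorial s n /
      (risingFactorial (3/2) n * (Nat.factorial n : ℝ))
      = (risingFactorial (1/2) n / risingFactorial (3/2) n) * risingFactorial s n /
        (Nat.factorial n : ℝ) := by ring
  rw [this, hkey]
  field_simp

lemma hyperF_nonneg {a b c x : ℝ} (ha : 0 < a) (hb : 0 < b) (hc : 0 < c) (hx : 0 ≤ x) :
    0 ≤ hyperF a b c x := by
  refine tsum_nonneg fun n => ?_
  have := rF_pos ha n
  have := rF_pos hb n
  have := rF_pos hc n
  have : (0:ℝ) < (Nat.factorial n : ℝ) := by positivity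
  positivity

/-- Upper bound for the complete-elliptic-type hypergeometric function. -/
lemma hyperF_log_bound {x : ℝ} (hx0 : 0 ≤ x) (hx1 : x < 1) :
    hyperF (1/2) (1/2) 1 x ≤ 1 - Real.log (1 - x) := by
  set a : ℕ → ℝ := fun n => risingFactorial (1/2) n / (Nat.factorial n : ℝ) with hadef
  have ha_sq : ∀ n : ℕ, a n ^ 2 * (2 * (n:ℝ) + 1) ≤ 1 := by
    intro n
    induction n with
    | zero => norm_num [hadef, risingFactorial]
    | succ m ih =>
      have hstep : a (m+1) * ((m:ℝ)+1) = a m * (1/2 + m) := by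
        simp only [hadef, rF_succ, Nat.factorial_succ]
        have h1 : ((m.factorial : ℝ)) ≠ 0 := by positivity
        have h2 : ((m : ℝ) + 1) ≠ 0 := by positivity
        push_cast
        field_simp
      have hsq3 : a (m+1)^2 * ((m:ℝ)+1)^2 * (2*(m:ℝ)+3)
          = a m^2 * (1/2+(m:ℝ))^2 * (2*(m:ℝ)+3) := by
        linear_combination ((2*(m:ℝ)+3) * (a (m+1) * ((m:ℝ)+1) + a m * (1/2+(m:ℝ)))) * hstep
      have key : ((1:ℝ)/2+(m:ℝ))^2*(2*(m:ℝ)+3) ≤ (2*(m:ℝ)+1)*((m:ℝ)+1)^2 := by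
        nlinarith [sq_nonneg ((m:ℝ))]
      have h4 : a (m+1)^2 * (2*((m:ℝ)+1)+1) * ((m:ℝ)+1)^2 ≤ ((m:ℝ)+1)^2 := by
        nlinarith [hsq3, mul_le_mul_of_nonneg_left key (sq_nonneg (a m)),
          mul_le_mul_of_nonneg_right ih (sq_nonneg ((m:ℝ)+1))]
      have hm2 : (0:ℝ) < ((m:ℝ)+1)^2 := by positivity
      push_cast
      nlinarith [h4, hm2]
  have hcoef : hyperF (1/2) (1/2) 1 x = ∑' n : ℕ, a n ^ 2 * x ^ n := by
    unfold hyperF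
    refine tsum_congr fun n => ?_
    rw [rF_one]
    simp only [hadef]
    have h1 : ((n.factorial : ℝ)) ≠ 0 := by positivity
    field_simp
  set f : ℕ → ℝ := fun n => if n = 0 then 1 else x ^ n / n with hfdef
  have hf : HasSum f (1 - Real.log (1 - x)) := by
    have habs : |x| < 1 := by rwa [abs_of_nonneg hx0]
    have h1 : HasSum (fun n : ℕ => x ^ (n+1) / ((n:ℝ)+1)) (-Real.log (1 - x)) :=
      hasSum_pow_div_log_of_abs_lt_one habs
    have he : (fun n : ℕ => f (n+1)) = fun n : ℕ => x ^ (n+1) / ((n:ℝ)+1) := by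
      funext n
      simp only [hfdef, Nat.succ_ne_zero, if_false]
      push_cast
      rfl
    have h2 : HasSum (fun n : ℕ => f (n+1)) (-Real.log (1-x)) := by rw [he]; exact h1
    have h3 := (hasSum_nat_add_iff (f := f) 1).1 h2
    have : -Real.log (1-x) + ∑ i ∈ Finset.range 1, f i = 1 - Real.log (1-x) := by
      simp [hfdef]
      ring
    rwa [this] at h3
  have hsle : ∀ n : ℕ, a n ^ 2 * x ^ n ≤ f n := by
    intro n
    cases n with
    | zero => norm_num [hadef, hfdef, risingFactorial]
    | succ m =>
      have hn : (0:ℝ) < ((m:ℕ):ℝ) + 1 := by positivity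
      have h1 : a (m+1) ^ 2 ≤ 1 / (((m:ℝ)+1)) := by
        rw [le_div_iff₀ hn]
        have hsq := ha_sq (m+1)
        push_cast at hsq
        nlinarith [hsq, sq_nonneg (a (m+1)), Nat.cast_nonneg (α := ℝ) m]
      have hxn : (0:ℝ) ≤ x ^ (m+1) := by positivity
      calc a (m+1) ^ 2 * x ^ (m+1) ≤ (1 / (((m:ℝ)+1))) * x ^ (m+1) :=
            mul_le_mul_of_nonneg_right h1 hxn
        _ = f (m+1) := by
            simp only [hfdef, Nat.succ_ne_zero, if_false]
            push_cast
            ring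
  have hnn : ∀ n : ℕ, 0 ≤ a n ^ 2 * x ^ n := fun n => by positivity
  have hsum : Summable (fun n : ℕ => a n ^ 2 * x ^ n) :=
    Summable.of_nonneg_of_le hnn hsle hf.summable
  rw [hcoef]
  calc (∑' n : ℕ, a n ^ 2 * x ^ n) ≤ ∑' n, f n := Summable.tsum_le_tsum hsle hsum hf.summable
    _ = 1 - Real.log (1 - x) := hf.tsum_eq

/-- The key integral identity. -/
lemma integral_base {ρ : ℝ} (hρ : 0 < ρ) {z : ℝ} (hz : 1 < z) :
    (∫ r in (0:ℝ)..(z-1), ((z + 1) ^ 2 - r ^ 2) ^ (-ρ / 2))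
      = (z - 1) * (z + 1) ^ (-ρ) * hyperF (1/2) (ρ/2) (3/2) ((z-1)^2 / (z+1)^2) := by
  have hz1 : (0:ℝ) < z - 1 := by linarith
  have hz2 : (0:ℝ) < z + 1 := by linarith
  have hs0 : 0 < ρ/2 := by linarith
  set b : ℕ → ℝ := fun n => risingFactorial (ρ/2) n / (Nat.factorial n : ℝ) with hbdef
  have hb_pos : ∀ n, 0 < b n := fun n => div_pos (rF_pos hs0 n) (by positivity)
  set k2 : ℝ := (z-1)^2/(z+1)^2 with hk2def
  have hk20 : 0 ≤ k2 := by positivity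
  have hk21 : k2 < 1 := by
    rw [hk2def, div_lt_one (by positivity)]
    nlinarith
  set F : ℕ → ℝ → ℝ := fun n t => (z+1)^(-ρ) * b n / (z+1)^(2*n) * t^(2*n) with hFdef
  have hsummax : Summable (fun n => b n * k2 ^ n) := (hasSum_binomial hs0 hk20 hk21).summable
  have hpt : ∀ t ∈ Set.uIoc (0:ℝ) (z-1),
      HasSum (fun n => F n t) (((z+1)^2 - t^2) ^ (-ρ/2)) := by
    intro t ht
    rw [Set.uIoc_of_le hz1.le] at ht
    have ht0 : 0 < t := ht.1
    have ht1 : t ≤ z - 1 := ht.2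
    set xt : ℝ := t^2/(z+1)^2 with hxtdef
    have hxt0 : 0 ≤ xt := by positivity
    have hxt1 : xt < 1 := by
      rw [hxtdef, div_lt_one (by positivity)]
      nlinarith
    have hbs := (hasSum_binomial hs0 hxt0 hxt1).mul_left ((z+1)^(-ρ))
    have hval : (z+1)^(-ρ) * (1 - xt)^(-(ρ/2)) = ((z+1)^2 - t^2) ^ (-ρ/2) := by
      have h1 : (z+1)^2 - t^2 = (z+1)^2 * (1 - xt) := by
        rw [hxtdef]
        field_simp
      have h2 : ((z+1)^2 : ℝ) ^ (-(ρ/2)) = (z+1)^(-ρ) := by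
        rw [← Real.rpow_natCast (z+1) 2, ← Real.rpow_mul hz2.le]
        congr 1
        push_cast
        ring
      rw [h1, show -ρ/2 = -(ρ/2) by ring,
        Real.mul_rpow (by positivity) (by linarith : (0:ℝ) ≤ 1 - xt), h2]
    have hfe : (fun n => (z+1)^(-ρ) * (b n * xt ^ n)) = fun n => F n t := by
      funext n
      simp only [hFdef, hxtdef]
      rw [div_pow, ← pow_mul, ← pow_mul]
      field_simp
    rw [← hval]
    rw [← hfe]
    exact hbs
  have hmain : HasSum (fun n => ∫ t in (0:ℝ)..(z-1), F n t)
      (∫ t in (0:ℝ)..(z-1), ((z+1)^2 - t^2) ^ (-ρ/2)) := by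
    apply intervalIntegral.hasSum_integral_of_dominated_convergence
      (bound := fun n _ => (z+1)^(-ρ) * b n * k2 ^ n)
    · intro n
      exact ((continuous_const.mul (continuous_pow (2*n))).aestronglyMeasurable)
    · intro n
      filter_upwards with t ht
      rw [Set.uIoc_of_le hz1.le] at ht
      have ht0 : 0 < t := ht.1
      have ht1 : t ≤ z - 1 := ht.2
      have hC : 0 ≤ (z+1)^(-ρ) * b n / (z+1)^(2*n) :=
        div_nonneg (mul_nonneg (Real.rpow_nonneg hz2.le _) (hb_pos n).le)
          (pow_nonneg hz2.le _)
      have h1 : t^(2*n) ≤ (z-1)^(2*n) := pow_le_pow_left₀ ht0.le ht1 _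
      have hre : (z+1)^(-ρ) * b n * k2^n = (z+1)^(-ρ) * b n / (z+1)^(2*n) * (z-1)^(2*n) := by
        rw [hk2def, div_pow, ← pow_mul, ← pow_mul]
        field_simp
      have hFt : F n t = (z+1)^(-ρ) * b n / (z+1)^(2*n) * t^(2*n) := rfl
      rw [Real.norm_eq_abs, hFt, abs_of_nonneg (mul_nonneg hC (pow_nonneg ht0.le _)), hre]
      exact mul_le_mul_of_nonneg_left h1 hC
    · filter_upwards with t ht
      simpa [mul_assoc] using hsummax.mul_left ((z+1)^(-ρ))
    · apply _root_.intervalIntegrable_const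
    · filter_upwards with t ht
      exact hpt t ht
  have hInt : ∀ n : ℕ, (∫ t in (0:ℝ)..(z-1), F n t)
      = (z-1) * (z+1)^(-ρ) *
        (risingFactorial (ρ/2) n / ((2*(n:ℝ)+1) * (Nat.factorial n : ℝ)) * k2 ^ n) := by
    intro n
    simp only [hFdef]
    rw [intervalIntegral.integral_const_mul, integral_pow]
    rw [zero_pow (by omega : 2*n+1 ≠ 0)]
    simp only [hbdef, hk2def]
    rw [show ((z-1)^2/(z+1)^2)^n = (z-1)^(2*n)/(z+1)^(2*n) by
      rw [div_pow, ← pow_mul, ← pow_mul]]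
    have h2n : ((2*n : ℕ):ℝ) + 1 ≠ 0 := by positivity
    have h2n' : (2*(n:ℝ)+1) ≠ 0 := by positivity
    have hfac : ((n.factorial : ℝ)) ≠ 0 := by positivity
    have hzp : (z+1) ≠ 0 := hz2.ne'
    push_cast
    field_simp
    ring
  rw [hyperF_half]
  rw [← hmain.tsum_eq, tsum_congr hInt, tsum_mul_left]

lemma aux_mono {s : ℝ} (hs0 : 0 < s) (hs1 : s < 1) {A : ℝ} (hA : 2 ≤ A) :
    (1 - s) * (A ^ (1 - s) - 2 ^ (1 - s)) ≤ (A - 2) * A ^ (-s) := by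
  set f : ℝ → ℝ := fun B => (B - 2) * B ^ (-s) - (1 - s) * (B ^ (1 - s) - 2 ^ (1 - s)) with hfdef
  have hder : ∀ B : ℝ, 0 < B → HasDerivAt f
      ((1 * B ^ (-s) + (B - 2) * (-s * B ^ (-s - 1))) - (1 - s) * ((1 - s) * B ^ (1 - s - 1))) B := by
    intro B hB
    have h1 : HasDerivAt (fun B : ℝ => B ^ (-s)) (-s * B ^ (-s - 1)) B :=
      Real.hasDerivAt_rpow_const (Or.inl hB.ne')
    have h2 : HasDerivAt (fun B : ℝ => B - 2) 1 B := (hasDerivAt_id B).sub_const 2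
    have h3 : HasDerivAt (fun B : ℝ => B ^ (1 - s)) ((1 - s) * B ^ (1 - s - 1)) B :=
      Real.hasDerivAt_rpow_const (Or.inl hB.ne')
    exact (h2.mul h1).sub ((h3.sub_const ((2:ℝ) ^ (1 - s))).const_mul (1 - s))
  have hcont : ContinuousOn f (Set.Ici (2:ℝ)) := fun B hB =>
    ((hder B (by simp only [Set.mem_Ici] at hB; linarith)).continuousAt).continuousWithinAt
  have hmono : StrictMonoOn f (Set.Ici (2:ℝ)) := by
    apply strictMonoOn_of_deriv_pos (convex_Ici 2) hcont
    intro B hB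
    rw [interior_Ici] at hB
    have hB2 : (2:ℝ) < B := hB
    have hB0 : (0:ℝ) < B := by linarith
    rw [(hder B hB0).deriv]
    have e1 : B ^ (-s-1) * B = B ^ (-s) := by
      rw [← Real.rpow_add_one hB0.ne' (-s-1)]
      congr 1
      ring
    have e2 : B ^ (1-s-1) = B ^ (-s) := by
      congr 1
      ring
    rw [e2, ← e1]
    have hP : 0 < B ^ (-s-1) := Real.rpow_pos_of_pos hB0 _
    nlinarith [mul_pos hP (show (0:ℝ) < s*(1-s)*B + 2*s by
      nlinarith [mul_pos (mul_pos hs0 (show (0:ℝ) < 1-s by linarith)) hB0])]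
  have hf2 : f 2 = 0 := by
    simp only [hfdef]
    ring
  rcases eq_or_lt_of_le hA with h | h
  · rw [← h]
    norm_num
  · have := hmono (Set.self_mem_Ici) (Set.mem_Ici.2 hA) h
    rw [hf2] at this
    simp only [hfdef] at this
    linarith

lemma integrand_le {ρ : ℝ} (hρ : 0 < ρ) {z r : ℝ} (hz : 1 < z) (hr : r ∈ Set.Icc 0 (z-1)) :
    ((z + 1) ^ 2 - r ^ 2) ^ (-ρ / 2) *
      (hyperF (1/2) (1/2) 1 (((z - 1) ^ 2 - r ^ 2) / ((z + 1) ^ 2 - r ^ 2))) ^ ρ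
    ≤ (1 + Real.log z) ^ ρ * ((z + 1) ^ 2 - r ^ 2) ^ (-ρ / 2) := by
  obtain ⟨hr0, hr1⟩ := hr
  have hz2 : (0:ℝ) < z + 1 := by linarith
  have hden : 0 < (z+1)^2 - r^2 := by nlinarith
  set x := ((z-1)^2 - r^2) / ((z+1)^2 - r^2) with hxdef
  have hx0 : 0 ≤ x := div_nonneg (by nlinarith) hden.le
  have hx1 : x < 1 := (div_lt_one hden).2 (by nlinarith)
  have hlz : 0 < Real.log z := Real.log_pos hz
  have h1x : 1 - x = (4*z) / ((z+1)^2 - r^2) := by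
    rw [hxdef]
    field_simp
    ring
  have hge : 1/z ≤ 1 - x := by
    rw [h1x, div_le_div_iff₀ (by linarith) hden]
    nlinarith
  have hlog : -Real.log (1-x) ≤ Real.log z := by
    have h2 := Real.log_le_log (by positivity : (0:ℝ) < 1/z) hge
    rw [one_div, Real.log_inv] at h2
    linarith
  have hhF : hyperF (1/2) (1/2) 1 x ≤ 1 + Real.log z := by
    have := hyperF_log_bound hx0 hx1
    linarith
  have hnn : 0 ≤ hyperF (1/2) (1/2) 1 x :=
    hyperF_nonneg (by norm_num) (by norm_num) one_pos hx0
  have hpow : (hyperF (1/2) (1/2) 1 x) ^ ρ ≤ (1 + Real.log z) ^ ρ :=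
    Real.rpow_le_rpow hnn hhF hρ.le
  have hbase : 0 ≤ ((z+1)^2 - r^2) ^ (-ρ/2) := Real.rpow_nonneg hden.le _
  calc ((z+1)^2 - r^2) ^ (-ρ/2) * (hyperF (1/2) (1/2) 1 x) ^ ρ
      ≤ ((z+1)^2 - r^2) ^ (-ρ/2) * (1 + Real.log z) ^ ρ :=
        mul_le_mul_of_nonneg_left hpow hbase
    _ = (1 + Real.log z) ^ ρ * ((z+1)^2 - r^2) ^ (-ρ/2) := mul_comm _ _

lemma base_intable {ρ z : ℝ} (hz : 1 < z) :
    IntervalIntegrable (fun r => ((z+1)^2 - r^2) ^ (-ρ/2)) volume 0 (z-1) := by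
  apply ContinuousOn.intervalIntegrable
  have h1 : ContinuousOn (fun r : ℝ => (z+1)^2 - r^2) (Set.uIcc 0 (z-1)) :=
    (continuous_const.sub (continuous_pow 2)).continuousOn
  apply h1.rpow_const
  intro r hr
  left
  rw [Set.uIcc_of_le (by linarith : (0:ℝ) ≤ z-1)] at hr
  have h2 : 0 < (z+1)^2 - r^2 := by
    obtain ⟨h0, h1'⟩ := hr
    nlinarith
  exact h2.ne'

theorem statement11 (ρ : ℝ) (hρ : 0 < ρ) :
    (∃ C > 0, ∀ z : ℝ, 1 < z →
      (∫ r in (0 : ℝ)..(z - 1),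
          ((z + 1) ^ 2 - r ^ 2) ^ (-ρ / 2) *
            (hyperF (1 / 2) (1 / 2) 1 (((z - 1) ^ 2 - r ^ 2) / ((z + 1) ^ 2 - r ^ 2))) ^ ρ)
        ≤ C * (1 + Real.log z) ^ ρ * (z - 1) * (z + 1) ^ (-ρ) *
            hyperF (1 / 2) (ρ / 2) (3 / 2) ((z - 1) ^ 2 / (z + 1) ^ 2)) ∧
    (ρ < 2 → ∃ C' > 0, ∀ z : ℝ, 1 < z →
      (∫ r in (0 : ℝ)..(z - 1),
          ((z + 1) ^ 2 - r ^ 2) ^ (-ρ / 2) *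
            (hyperF (1 / 2) (1 / 2) 1 (((z - 1) ^ 2 - r ^ 2) / ((z + 1) ^ 2 - r ^ 2))) ^ ρ)
        ≤ C' * (1 + Real.log z) ^ ρ * (z - 1) * (z + 1) ^ (-ρ)) := by
  constructor
  · refine ⟨1, one_pos, fun z hz => ?_⟩
    have hz1 : (0:ℝ) < z - 1 := by linarith
    have hz2 : (0:ℝ) < z + 1 := by linarith
    have hB : 0 < 1 + Real.log z := by
      have := Real.log_pos hz
      linarith
    have hg_int : IntervalIntegrable
        (fun r => (1 + Real.log z) ^ ρ * ((z+1)^2 - r^2) ^ (-ρ/2)) volume 0 (z-1) :=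
      (base_intable (ρ := ρ) hz).const_mul _
    have hRHSnn : 0 ≤ hyperF (1/2) (ρ/2) (3/2) ((z-1)^2/(z+1)^2) :=
      hyperF_nonneg (by norm_num) (by linarith) (by norm_num) (by positivity)
    by_cases hfi : IntervalIntegrable (fun r => ((z + 1) ^ 2 - r ^ 2) ^ (-ρ / 2) *
        (hyperF (1 / 2) (1 / 2) 1 (((z - 1) ^ 2 - r ^ 2) / ((z + 1) ^ 2 - r ^ 2))) ^ ρ)
        volume 0 (z - 1)
    · have hle := intervalIntegral.integral_mono_on hz1.le hfi hg_int
        (fun r hr => integrand_le hρ hz hr)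
      have heq : (∫ r in (0:ℝ)..(z-1), (1 + Real.log z) ^ ρ * ((z+1)^2 - r^2) ^ (-ρ/2))
          = (1 + Real.log z) ^ ρ * ((z - 1) * (z + 1) ^ (-ρ) *
            hyperF (1/2) (ρ/2) (3/2) ((z-1)^2/(z+1)^2)) := by
        rw [intervalIntegral.integral_const_mul, integral_base hρ hz]
      refine le_trans hle ?_
      rw [heq]
      apply le_of_eq
      ring
    · rw [intervalIntegral.integral_undef hfi]
      have h1 : 0 ≤ (1 + Real.log z) ^ ρ := Real.rpow_nonneg hB.le ρ
      have h2 : 0 ≤ (z + 1) ^ (-ρ) := Real.rpow_nonneg hz2.le _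
      have : (0:ℝ) ≤ 1 * (1 + Real.log z) ^ ρ * (z - 1) * (z + 1) ^ (-ρ) *
          hyperF (1/2) (ρ/2) (3/2) ((z-1)^2/(z+1)^2) := by
        apply mul_nonneg
        apply mul_nonneg
        apply mul_nonneg
        · linarith
        · linarith
        · exact h2
        · exact hRHSnn
      linarith
  · intro hρ2
    have h2ρ : (0:ℝ) < 2 - ρ := by linarith
    refine ⟨4/(2-ρ)^2, div_pos (by norm_num) (pow_pos h2ρ 2), fun z hz => ?_⟩
    have hz1 : (0:ℝ) < z - 1 := by linarith
    have hz2 : (0:ℝ) < z + 1 := by linarith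
    have hB : 0 < 1 + Real.log z := by
      have := Real.log_pos hz
      linarith
    have hBnn : 0 ≤ (1 + Real.log z) ^ ρ := Real.rpow_nonneg hB.le ρ
    have hs1 : 0 < 1 - ρ/2 := by linarith
    have hg2_int : IntervalIntegrable
        (fun r => (1 + Real.log z) ^ ρ * ((z+1) ^ (-(ρ/2)) * (z+1-r) ^ (-(ρ/2))))
        volume 0 (z-1) := by
      apply ContinuousOn.intervalIntegrable
      apply ContinuousOn.mul continuousOn_const
      apply ContinuousOn.mul continuousOn_const
      apply ContinuousOn.rpow_const ((continuous_const.sub continuous_id).continuousOn)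
      intro r hr
      left
      rw [Set.uIcc_of_le hz1.le] at hr
      have : (0:ℝ) < z + 1 - r := by
        have := hr.2
        linarith
      exact this.ne'
    have hpt2 : ∀ r ∈ Set.Icc (0:ℝ) (z-1),
        ((z + 1) ^ 2 - r ^ 2) ^ (-ρ / 2) *
          (hyperF (1 / 2) (1 / 2) 1 (((z - 1) ^ 2 - r ^ 2) / ((z + 1) ^ 2 - r ^ 2))) ^ ρ
        ≤ (1 + Real.log z) ^ ρ * ((z+1) ^ (-(ρ/2)) * (z+1-r) ^ (-(ρ/2))) := by
      intro r hr
      refine le_trans (integrand_le hρ hz hr) ?_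
      obtain ⟨hr0, hr1⟩ := hr
      have hpos1 : (0:ℝ) < z+1-r := by linarith
      have hpos2 : (0:ℝ) < z+1+r := by linarith
      have h2 : ((z+1)^2 - r^2) ^ (-ρ/2) ≤ (z+1)^(-(ρ/2)) * (z+1-r)^(-(ρ/2)) := by
        have hfac : (z+1)^2 - r^2 = (z+1-r) * (z+1+r) := by ring
        rw [hfac, show -ρ/2 = -(ρ/2) by ring, Real.mul_rpow hpos1.le hpos2.le, mul_comm]
        exact mul_le_mul_of_nonneg_right
          (Real.rpow_le_rpow_of_nonpos hz2 (by linarith) (by linarith))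
          (Real.rpow_nonneg hpos1.le _)
      exact mul_le_mul_of_nonneg_left h2 hBnn
    have hJ : (∫ r in (0:ℝ)..(z-1), (z+1-r) ^ (-(ρ/2)))
        = ((z+1) ^ (1-ρ/2) - 2 ^ (1-ρ/2)) / (1-ρ/2) := by
      have hcomp := intervalIntegral.integral_comp_sub_left (a := (0:ℝ)) (b := z-1)
        (fun u => u ^ (-(ρ/2))) (z+1)
      rw [hcomp, show z+1-(z-1) = 2 by ring, sub_zero,
        integral_rpow (Or.inl (by linarith : (-1:ℝ) < -(ρ/2)))]
      rw [show -(ρ/2) + 1 = 1 - ρ/2 by ring]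
    have hJle : (∫ r in (0:ℝ)..(z-1), (z+1-r) ^ (-(ρ/2)))
        ≤ (z-1) * (z+1) ^ (-(ρ/2)) / (1-ρ/2)^2 := by
      rw [hJ]
      have haux := aux_mono (s := ρ/2) (by linarith) (by linarith) (A := z+1) (by linarith)
      rw [show z+1-2 = z-1 by ring] at haux
      rw [div_le_div_iff₀ hs1 (by positivity)]
      nlinarith [haux]
    by_cases hfi : IntervalIntegrable (fun r => ((z + 1) ^ 2 - r ^ 2) ^ (-ρ / 2) *
        (hyperF (1 / 2) (1 / 2) 1 (((z - 1) ^ 2 - r ^ 2) / ((z + 1) ^ 2 - r ^ 2))) ^ ρ)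
        volume 0 (z - 1)
    · have hle := intervalIntegral.integral_mono_on hz1.le hfi hg2_int hpt2
      refine le_trans hle ?_
      rw [intervalIntegral.integral_const_mul, intervalIntegral.integral_const_mul]
      have hPQ : (z+1)^(-(ρ/2)) * (z+1)^(-(ρ/2)) = (z+1)^(-ρ) := by
        rw [← Real.rpow_add hz2]
        congr 1
        ring
      have hP : 0 ≤ (z+1)^(-(ρ/2)) := Real.rpow_nonneg hz2.le _
      have hstep : (z+1)^(-(ρ/2)) * (∫ r in (0:ℝ)..(z-1), (z+1-r) ^ (-(ρ/2)))
          ≤ 4/(2-ρ)^2 * (z-1) * (z+1)^(-ρ) := by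
        refine le_trans (mul_le_mul_of_nonneg_left hJle hP) ?_
        apply le_of_eq
        rw [show (z+1)^(-(ρ/2)) * ((z-1) * (z+1)^(-(ρ/2)) / (1-ρ/2)^2)
            = ((z+1)^(-(ρ/2)) * (z+1)^(-(ρ/2))) * (z-1) / (1-ρ/2)^2 by ring, hPQ]
        rw [show (1-ρ/2)^2 = (2-ρ)^2/4 by ring]
        field_simp
      calc (1 + Real.log z) ^ ρ *
            ((z+1)^(-(ρ/2)) * ∫ r in (0:ℝ)..(z-1), (z+1-r) ^ (-(ρ/2)))
          ≤ (1 + Real.log z) ^ ρ * (4/(2-ρ)^2 * (z-1) * (z+1)^(-ρ)) :=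
            mul_le_mul_of_nonneg_left hstep hBnn
        _ = 4/(2-ρ)^2 * (1 + Real.log z) ^ ρ * (z-1) * (z+1)^(-ρ) := by ring
    · rw [intervalIntegral.integral_undef hfi]
      have h2 : 0 ≤ (z + 1) ^ (-ρ) := Real.rpow_nonneg hz2.le _
      have hc : (0:ℝ) ≤ 4/(2-ρ)^2 := le_of_lt (div_pos (by norm_num) (pow_pos h2ρ 2))
      have : (0:ℝ) ≤ 4/(2-ρ)^2 * (1 + Real.log z) ^ ρ * (z - 1) * (z + 1) ^ (-ρ) := by
        apply mul_nonneg
        apply mul_nonneg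
        apply mul_nonneg hc hBnn
        · linarith
        · exact h2
      linarith
end
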